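/- Let φ(u) := (e^{-u}(-2+4u-u²) + e^{-2u}(4-4u-u²) - 2e^{-3u})/(1-e^{-u})³ for u > 0, extended by φ(0) = 1. Then the radially symmetric function g : ℝ² → ℝ defined by g(x) = φ(π‖x‖²) is Lebesgue integrable on ℝ². -/

import Mathlib

open MeasureTheory

/-- The radial profile `φ` of the truncated pair correlation. -/
noncomputable def phi (u : ℝ) : ℝ :=
  (Real.exp (-u) * (-2 + 4*u - u^2) + Real.exp (-2*u) * (4 - 4*u - u^2)
    - 2 * Real.exp (-3*u)) / (1 - Real.exp (-u))^3

/-- `φ` extended to `[0,∞)` by `φ(0) = 1`. -/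
noncomputable def phiExt (u : ℝ) : ℝ := if u = 0 then 1 else phi u

/- Numerator of `phi` and its first three derivatives. -/
noncomputable def Nf (u : ℝ) : ℝ :=
  Real.exp (-u) * (-2 + 4*u - u^2) + Real.exp (-2*u) * (4 - 4*u - u^2)
    - 2 * Real.exp (-3*u)

noncomputable def Nf1 (u : ℝ) : ℝ :=
  Real.exp (-u) * (6 - 6*u + u^2) + Real.exp (-2*u) * (-12 + 6*u + 2*u^2)
    + 6 * Real.exp (-3*u)

noncomputable def Nf2 (u : ℝ) : ℝ :=
  Real.exp (-u) * (-12 + 8*u - u^2) + Real.exp (-2*u) * (30 - 8*u - 4*u^2)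
    - 18 * Real.exp (-3*u)

noncomputable def Nf3 (u : ℝ) : ℝ :=
  Real.exp (-u) * (20 - 10*u + u^2) + Real.exp (-2*u) * (-68 + 8*u + 8*u^2)
    + 54 * Real.exp (-3*u)

lemma hasDerivAt_expPoly (k a b c u : ℝ) :
    HasDerivAt (fun u => Real.exp (k*u) * (a + b*u + c*u^2))
      (Real.exp (k*u) * ((k*a + b) + (k*b + 2*c)*u + (k*c)*u^2)) u := by
  have h1 : HasDerivAt (fun u : ℝ => Real.exp (k*u)) (Real.exp (k*u) * k) u := by
    exact ((Real.hasDerivAt_exp (k*u)).comp u ((hasDerivAt_id u).const_mul k)).congr_deriv (by simp)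
  have h2 : HasDerivAt (fun u : ℝ => a + b*u + c*u^2) (b + c*(2*u)) u := by
    have hb : HasDerivAt (fun u : ℝ => a + b*u) b u := by
      simpa using ((hasDerivAt_id u).const_mul b).const_add a
    have hc : HasDerivAt (fun u : ℝ => c*u^2) (c*(2*u)) u := by
      simpa using (hasDerivAt_pow 2 u).const_mul c
    exact hb.add hc
  have := h1.mul h2
  exact this.congr_deriv (by ring)

lemma hasDerivAt_Nf (u : ℝ) : HasDerivAt Nf (Nf1 u) u := by
  have h := ((hasDerivAt_expPoly (-1) (-2) 4 (-1) u).add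
    (hasDerivAt_expPoly (-2) 4 (-4) (-1) u)).add (hasDerivAt_expPoly (-3) (-2) 0 0 u)
  have hfun : Nf = fun u => (Real.exp ((-1)*u) * (-2 + 4*u + (-1)*u^2)
      + Real.exp ((-2)*u) * (4 + (-4)*u + (-1)*u^2))
      + Real.exp ((-3)*u) * (-2 + 0*u + 0*u^2) := by
    funext v; simp only [Nf]; ring_nf
  rw [hfun]
  exact h.congr_deriv (by simp only [Nf1]; ring_nf)

lemma hasDerivAt_Nf1 (u : ℝ) : HasDerivAt Nf1 (Nf2 u) u := by
  have h := ((hasDerivAt_expPoly (-1) 6 (-6) 1 u).add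
    (hasDerivAt_expPoly (-2) (-12) 6 2 u)).add (hasDerivAt_expPoly (-3) 6 0 0 u)
  have hfun : Nf1 = fun u => (Real.exp ((-1)*u) * (6 + (-6)*u + 1*u^2)
      + Real.exp ((-2)*u) * (-12 + 6*u + 2*u^2))
      + Real.exp ((-3)*u) * (6 + 0*u + 0*u^2) := by
    funext v; simp only [Nf1]; ring_nf
  rw [hfun]
  exact h.congr_deriv (by simp only [Nf2]; ring_nf)

lemma hasDerivAt_Nf2 (u : ℝ) : HasDerivAt Nf2 (Nf3 u) u := by
  have h := ((hasDerivAt_expPoly (-1) (-12) 8 (-1) u).add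
    (hasDerivAt_expPoly (-2) 30 (-8) (-4) u)).add (hasDerivAt_expPoly (-3) (-18) 0 0 u)
  have hfun : Nf2 = fun u => (Real.exp ((-1)*u) * (-12 + 8*u + (-1)*u^2)
      + Real.exp ((-2)*u) * (30 + (-8)*u + (-4)*u^2))
      + Real.exp ((-3)*u) * (-18 + 0*u + 0*u^2) := by
    funext v; simp only [Nf2]; ring_nf
  rw [hfun]
  exact h.congr_deriv (by simp only [Nf3]; ring_nf)

/-- If `f 0 = 0` and the derivative is nonnegative on `[0,1]`, then `f ≥ 0` there. -/
lemma nonneg_of_hasDerivAt (f f' : ℝ → ℝ) (hd : ∀ u, HasDerivAt f (f' u) u)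
    (h0 : f 0 = 0) (hf' : ∀ u ∈ Set.Icc (0:ℝ) 1, 0 ≤ f' u) :
    ∀ u ∈ Set.Icc (0:ℝ) 1, 0 ≤ f u := by
  intro u hu
  have mono : MonotoneOn f (Set.Icc (0:ℝ) 1) := by
    apply monotoneOn_of_deriv_nonneg (convex_Icc 0 1)
      (fun v _ => (hd v).continuousAt.continuousWithinAt)
      (fun v _ => (hd v).differentiableAt.differentiableWithinAt)
    intro v hv
    rw [(hd v).deriv]
    exact hf' v (interior_subset hv)
  have h := mono (Set.mem_Icc.2 ⟨le_refl 0, zero_le_one⟩) hu hu.1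
  rw [h0] at h
  exact h

lemma Nf3_bound : ∀ u ∈ Set.Icc (0:ℝ) 1, |Nf3 u| ≤ 169 := by
  intro u hu
  obtain ⟨h0, h1⟩ := Set.mem_Icc.1 hu
  have e1 : Real.exp (-u) ≤ 1 := Real.exp_le_one_iff.2 (by linarith)
  have e2 : Real.exp (-2*u) ≤ 1 := Real.exp_le_one_iff.2 (by linarith)
  have e3 : Real.exp (-3*u) ≤ 1 := Real.exp_le_one_iff.2 (by linarith)
  have p1 : (0:ℝ) < Real.exp (-u) := Real.exp_pos _
  have p2 : (0:ℝ) < Real.exp (-2*u) := Real.exp_pos _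
  have p3 : (0:ℝ) < Real.exp (-3*u) := Real.exp_pos _
  rw [abs_le]
  constructor <;> simp only [Nf3] <;> nlinarith [mul_nonneg p1.le (by nlinarith : (0:ℝ) ≤ 20 - 10*u + u^2),
    mul_nonneg p2.le (by nlinarith : (0:ℝ) ≤ 68 - 8*u - 8*u^2),
    mul_le_of_le_one_left (by nlinarith : (0:ℝ) ≤ 20 - 10*u + u^2) e1,
    mul_le_of_le_one_left (by nlinarith : (0:ℝ) ≤ 68 - 8*u - 8*u^2) e2]

lemma Nf2_bound : ∀ u ∈ Set.Icc (0:ℝ) 1, |Nf2 u| ≤ 169 * u := by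
  have h0 : Nf2 0 = 0 := by simp [Nf2]; norm_num
  have hupper := nonneg_of_hasDerivAt (fun u => 169*u - Nf2 u) (fun u => 169 - Nf3 u)
    (fun u => (((hasDerivAt_id u).const_mul (169:ℝ)).sub (hasDerivAt_Nf2 u)).congr_deriv (by ring))
    (by simp [h0])
    (fun u hu => by have := Nf3_bound u hu; rw [abs_le] at this
                    show (0:ℝ) ≤ 169 - Nf3 u; linarith [this.2])
  have hlower := nonneg_of_hasDerivAt (fun u => 169*u + Nf2 u) (fun u => 169 + Nf3 u)
    (fun u => (((hasDerivAt_id u).const_mul (169:ℝ)).add (hasDerivAt_Nf2 u)).congr_deriv (by ring))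
    (by simp [h0])
    (fun u hu => by have := Nf3_bound u hu; rw [abs_le] at this
                    show (0:ℝ) ≤ 169 + Nf3 u; linarith [this.1])
  intro u hu
  have h1 := hupper u hu
  have h2 := hlower u hu
  rw [abs_le]
  constructor <;> linarith

lemma Nf1_bound : ∀ u ∈ Set.Icc (0:ℝ) 1, |Nf1 u| ≤ 169/2 * u^2 := by
  have h0 : Nf1 0 = 0 := by simp [Nf1]; norm_num
  have hupper := nonneg_of_hasDerivAt (fun u => 169/2*u^2 - Nf1 u) (fun u => 169*u - Nf2 u)
    (fun u => by
      have := ((hasDerivAt_pow 2 u).const_mul (169/2 : ℝ)).sub (hasDerivAt_Nf1 u)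
      exact this.congr_deriv (by push_cast; ring))
    (by simp [h0])
    (fun u hu => by
      have := Nf2_bound u hu; rw [abs_le] at this
      show (0:ℝ) ≤ 169*u - Nf2 u; linarith [this.2])
  have hlower := nonneg_of_hasDerivAt (fun u => 169/2*u^2 + Nf1 u) (fun u => 169*u + Nf2 u)
    (fun u => by
      have := ((hasDerivAt_pow 2 u).const_mul (169/2 : ℝ)).add (hasDerivAt_Nf1 u)
      exact this.congr_deriv (by push_cast; ring))
    (by simp [h0])
    (fun u hu => by
      have := Nf2_bound u hu; rw [abs_le] at this
      show (0:ℝ) ≤ 169*u + Nf2 u; linarith [this.1])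
  intro u hu
  have h1 := hupper u hu
  have h2 := hlower u hu
  rw [abs_le]
  constructor <;> linarith

lemma Nf_bound : ∀ u ∈ Set.Icc (0:ℝ) 1, |Nf u| ≤ 169/6 * u^3 := by
  have h0 : Nf 0 = 0 := by simp [Nf]; norm_num
  have hupper := nonneg_of_hasDerivAt (fun u => 169/6*u^3 - Nf u) (fun u => 169/2*u^2 - Nf1 u)
    (fun u => by
      have := ((hasDerivAt_pow 3 u).const_mul (169/6 : ℝ)).sub (hasDerivAt_Nf u)
      exact this.congr_deriv (by push_cast; ring))
    (by simp [h0])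
    (fun u hu => by
      have := Nf1_bound u hu; rw [abs_le] at this
      show (0:ℝ) ≤ 169/2*u^2 - Nf1 u; linarith [this.2])
  have hlower := nonneg_of_hasDerivAt (fun u => 169/6*u^3 + Nf u) (fun u => 169/2*u^2 + Nf1 u)
    (fun u => by
      have := ((hasDerivAt_pow 3 u).const_mul (169/6 : ℝ)).add (hasDerivAt_Nf u)
      exact this.congr_deriv (by push_cast; ring))
    (by simp [h0])
    (fun u hu => by
      have := Nf1_bound u hu; rw [abs_le] at this
      show (0:ℝ) ≤ 169/2*u^2 + Nf1 u; linarith [this.1])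
  intro u hu
  have h1 := hupper u hu
  have h2 := hlower u hu
  rw [abs_le]
  constructor <;> linarith

/-- Crude global bound on the numerator for `u ≥ 0`. -/
lemma Nf_bound_global (u : ℝ) (hu : 0 ≤ u) :
    |Nf u| ≤ Real.exp (-u) * (8 + 8*u + 2*u^2) := by
  have e21 : Real.exp (-2*u) ≤ Real.exp (-u) := Real.exp_le_exp.2 (by linarith)
  have e31 : Real.exp (-3*u) ≤ Real.exp (-u) := Real.exp_le_exp.2 (by linarith)
  have p1 : (0:ℝ) < Real.exp (-u) := Real.exp_pos _
  have p2 : (0:ℝ) < Real.exp (-2*u) := Real.exp_pos _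
  have p3 : (0:ℝ) < Real.exp (-3*u) := Real.exp_pos _
  rw [abs_le]
  constructor <;> simp only [Nf] <;>
    nlinarith [mul_nonneg (sub_nonneg.2 e21) (by nlinarith : (0:ℝ) ≤ 4 + 4*u + u^2),
      mul_nonneg (sub_nonneg.2 e31) (by norm_num : (0:ℝ) ≤ 2),
      mul_nonneg p1.le (by nlinarith : (0:ℝ) ≤ 4 + 2*u^2),
      mul_nonneg p2.le (by nlinarith : (0:ℝ) ≤ 8*u + 2*u^2),
      mul_nonneg p2.le (by norm_num : (0:ℝ) ≤ 8)]

lemma exp_neg_one_bounds : (9:ℝ)/25 ≤ Real.exp (-1) ∧ Real.exp (-1) ≤ (37:ℝ)/100 := by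
  have hmul : Real.exp (-1) * Real.exp 1 = 1 := by
    rw [← Real.exp_add]; norm_num
  have hlt := Real.exp_one_lt_d9
  have hgt := Real.exp_one_gt_d9
  have hp : (0:ℝ) < Real.exp 1 := Real.exp_pos 1
  constructor <;> nlinarith

/-- The key pointwise bound. -/
lemma phiExt_bound (u : ℝ) (hu : 0 ≤ u) :
    |phiExt u| ≤ 1000 * Real.exp (-u/2) := by
  rcases eq_or_lt_of_le hu with h0 | h0
  · rw [phiExt, if_pos h0.symm, ← h0]
    simp [Real.exp_zero]
  rw [phiExt, if_neg (ne_of_gt h0)]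
  have hphi : phi u = Nf u / (1 - Real.exp (-u))^3 := rfl
  have hexplt : Real.exp (-u) < 1 := Real.exp_lt_one_iff.2 (by linarith)
  have hD : 0 < 1 - Real.exp (-u) := by linarith
  have hD3 : 0 < (1 - Real.exp (-u))^3 := by positivity
  rw [hphi, abs_div, abs_of_pos hD3, div_le_iff₀ hD3]
  rcases le_or_gt u 1 with hu1 | hu1
  · -- small u : use the cubic bound
    have hN := Nf_bound u (Set.mem_Icc.2 ⟨hu, hu1⟩)
    -- 1 - exp(-u) ≥ u/2
    have h1u : u + 1 ≤ Real.exp u := Real.add_one_le_exp u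
    have hEinv : Real.exp (-u) * Real.exp u = 1 := by
      rw [← Real.exp_add]; norm_num
    have hep : (0:ℝ) < Real.exp u := Real.exp_pos u
    have hle : Real.exp (-u) * (1+u) ≤ 1 := by
      nlinarith [Real.exp_pos (-u)]
    have hhalf : u/2 ≤ 1 - Real.exp (-u) := by
      nlinarith [Real.exp_pos (-u)]
    have hcube : (u/2)^3 ≤ (1 - Real.exp (-u))^3 :=
      pow_le_pow_left₀ (by positivity) hhalf 3
    have hexp2 : (9:ℝ)/25 ≤ Real.exp (-u/2) := by
      refine le_trans exp_neg_one_bounds.1 (Real.exp_le_exp.2 (by linarith))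
    nlinarith [mul_nonneg (by norm_num : (0:ℝ) ≤ (9:ℝ)/25) (pow_nonneg hu 3),
      mul_le_mul hexp2 hcube (by positivity) (Real.exp_pos _).le]
  · -- large u
    have hN := Nf_bound_global u hu
    have hDe : 1 - Real.exp (-1) ≤ 1 - Real.exp (-u) := by
      have : Real.exp (-u) ≤ Real.exp (-1) := Real.exp_le_exp.2 (by linarith)
      linarith
    have hd1 : (63:ℝ)/100 ≤ 1 - Real.exp (-u) := by
      have := exp_neg_one_bounds.2
      linarith
    have hD3' : (1:ℝ)/4 ≤ (1 - Real.exp (-u))^3 := by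
      nlinarith [pow_le_pow_left₀ (by norm_num : (0:ℝ) ≤ 63/100) hd1 3]
    -- exp(-u) = exp(-u/2)^2
    have hsplit : Real.exp (-u) = Real.exp (-u/2) * Real.exp (-u/2) := by
      rw [← Real.exp_add]; ring_nf
    have hq : Real.exp (-u/2) * (1 + u/4)^2 ≤ 1 := by
      have h1 : (1 + u/4) ≤ Real.exp (u/4) := by
        have := Real.add_one_le_exp (u/4); linarith
      have h2 : (1 + u/4)^2 ≤ Real.exp (u/2) := by
        have := mul_le_mul h1 h1 (by linarith) (Real.exp_pos _).le
        rw [← Real.exp_add] at this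
        calc (1 + u/4)^2 = (1+u/4)*(1+u/4) := by ring
        _ ≤ Real.exp (u/4 + u/4) := this
        _ = Real.exp (u/2) := by ring_nf
      have hmul : Real.exp (-u/2) * Real.exp (u/2) = 1 := by
        rw [← Real.exp_add, show -u/2 + u/2 = 0 by ring, Real.exp_zero]
      nlinarith [Real.exp_pos (-u/2)]
    have hE : (0:ℝ) < Real.exp (-u/2) := Real.exp_pos _
    calc |Nf u| ≤ Real.exp (-u) * (8 + 8*u + 2*u^2) := hN
      _ ≤ 1000 * Real.exp (-u/2) * (1/4) := by
          rw [hsplit]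
          have key : Real.exp (-u/2) * (8 + 8*u + 2*u^2) ≤ 250 := by
            nlinarith [mul_nonneg hE.le (by linarith : (0:ℝ) ≤ 24 + 8*u)]
          nlinarith [mul_le_mul_of_nonneg_left key hE.le]
      _ ≤ 1000 * Real.exp (-u/2) * (1 - Real.exp (-u))^3 := by
          nlinarith [mul_nonneg hE.le (by linarith : (0:ℝ) ≤ (1 - Real.exp (-u))^3 - 1/4)]

/-- The radially symmetric function `g(x) = φ(π ‖x‖²)` is Lebesgue integrable
on `ℝ²`. -/
theorem stmt_5 :
    Integrable (fun x : EuclideanSpace ℝ (Fin 2) => phiExt (Real.pi * ‖x‖^2)) := by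
  have hmeas : Measurable phiExt := by
    have hnum : Measurable fun u : ℝ => Real.exp (-u) * (-2 + 4*u - u^2)
        + Real.exp (-2*u) * (4 - 4*u - u^2) - 2 * Real.exp (-3*u) := by fun_prop
    have hden : Measurable fun u : ℝ => (1 - Real.exp (-u))^3 := by fun_prop
    unfold phiExt phi
    exact Measurable.ite (measurableSet_eq) measurable_const (hnum.div hden)
  have hcont : Continuous fun x : EuclideanSpace ℝ (Fin 2) => Real.pi * ‖x‖^2 := by
    fun_prop
  have hg : Integrable (fun x : EuclideanSpace ℝ (Fin 2) =>
      1000 * Real.exp (-(Real.pi * ‖x‖^2)/2)) := by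
    have h := (GaussianFourier.integrable_cexp_neg_mul_sq_norm_add (V := EuclideanSpace ℝ (Fin 2))
      (b := ((Real.pi/2 : ℝ) : ℂ)) (by simp [Real.pi_pos]) 0 0).norm
    have heq : (fun v : EuclideanSpace ℝ (Fin 2) =>
        ‖Complex.exp (-((Real.pi/2 : ℝ) : ℂ) * (‖v‖:ℂ)^2 + 0 * ((inner ℝ (0 : EuclideanSpace ℝ (Fin 2)) v : ℝ) : ℂ))‖)
        = fun v : EuclideanSpace ℝ (Fin 2) => Real.exp (-(Real.pi * ‖v‖^2)/2) := by
      funext v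
      rw [Complex.norm_exp]
      congr 1
      have : -((Real.pi/2 : ℝ) : ℂ) * (‖v‖:ℂ)^2 + 0 * ((inner ℝ (0 : EuclideanSpace ℝ (Fin 2)) v : ℝ) : ℂ)
          = ((-(Real.pi * ‖v‖^2)/2 : ℝ) : ℂ) := by push_cast; ring
      rw [this, Complex.ofReal_re]
    rw [heq] at h
    exact h.const_mul 1000
  apply Integrable.mono' hg (hmeas.comp hcont.measurable).aestronglyMeasurable
  filter_upwards with x
  rw [Real.norm_eq_abs]
  have h := phiExt_bound (Real.pi * ‖x‖^2) (by positivity)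
  exact h
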